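/- Let F(x) = (1/2)xᵀAx − bᵀx + τ‖x‖₁ with A symmetric positive semidefinite, τ ≥ 0, and suppose the set of optimal solutions of min F is nonempty with optimal value F*. Let v(x) denote the minimum-norm subgradient of F at x. Then for any δ ≥ 0 there exists η > 0 such that for all x with F(x) − F* ≤ δ, one has F(x) − F* ≤ η‖v(x)‖². -/

import Mathlib

open Matrix Filter Topology
open scoped InnerProductSpace

/-- `f(x) = (1/2) xᵀAx − bᵀx`. -/
noncomputable def quadObj {n : ℕ} (A : Matrix (Fin n) (Fin n) ℝ) (b : Fin n → ℝ)
    (x : Fin n → ℝ) : ℝ :=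
  (1 / 2) * (x ⬝ᵥ A.mulVec x) - b ⬝ᵥ x

/-- `F(x) = (1/2) xᵀAx − bᵀx + τ‖x‖₁`. -/
noncomputable def l1QuadObj {n : ℕ} (A : Matrix (Fin n) (Fin n) ℝ) (b : Fin n → ℝ)
    (τ : ℝ) (x : Fin n → ℝ) : ℝ :=
  quadObj A b x + τ * ∑ i, |x i|

/-- The minimum-norm subgradient `v(x)` of `F`, given componentwise. -/
noncomputable def minSubgrad {n : ℕ} (A : Matrix (Fin n) (Fin n) ℝ) (b : Fin n → ℝ)
    (τ : ℝ) (x : Fin n → ℝ) : Fin n → ℝ := fun i =>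
  if x i ≠ 0 then (A.mulVec x - b) i + τ * Real.sign (x i)
  else min ((A.mulVec x - b) i + τ) (max 0 ((A.mulVec x - b) i - τ))



theorem hoffman {E : Type*} [NormedAddCommGroup E] [InnerProductSpace ℝ E]
    [FiniteDimensional ℝ E] {ι : Type*} [Fintype ι] (M : ι → E) (q : ι → ℝ)
    (hne : ∃ y : E, ∀ j, ⟪M j, y⟫_ℝ ≤ q j) :
    ∃ K > 0, ∀ x : E, ∀ r : ℝ, 0 ≤ r → (∀ j, ⟪M j, x⟫_ℝ - q j ≤ r) →
      ∃ y, (∀ j, ⟪M j, y⟫_ℝ ≤ q j) ∧ ‖x - y‖ ≤ K * r := by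
  classical
  set P : Set E := {y | ∀ j, ⟪M j, y⟫_ℝ ≤ q j} with hP
  have hPconv : Convex ℝ P := by
    intro y hy z hz a c ha hc hac j
    simp only [inner_add_right, real_inner_smul_right]
    calc a * ⟪M j, y⟫_ℝ + c * ⟪M j, z⟫_ℝ ≤ a * q j + c * q j :=
          add_le_add (mul_le_mul_of_nonneg_left (hy j) ha)
            (mul_le_mul_of_nonneg_left (hz j) hc)
      _ = q j := by rw [← add_mul, hac, one_mul]
  have hPclosed : IsClosed P := by
    have : P = ⋂ j, {y : E | ⟪M j, y⟫_ℝ ≤ q j} := by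
      ext y; simp [Set.mem_iInter, hP]
    rw [this]
    exact isClosed_iInter fun j =>
      isClosed_le (continuous_const.inner continuous_id) continuous_const
  have proj : ∀ x : E, ∃ p ∈ P, ∀ z ∈ P, ⟪x - p, z - p⟫_ℝ ≤ 0 := by
    intro x
    obtain ⟨p, hpP, hmin⟩ :=
      exists_norm_eq_iInf_of_complete_convex hne (hPclosed.isComplete) hPconv x
    exact ⟨p, hpP, fun z hz =>
      ((norm_eq_iInf_iff_real_inner_le_zero hPconv hpP).1 hmin) z hz⟩
  by_contra hcon
  push_neg at hcon
  have h' : ∀ k : ℕ, ∃ x : E, ∃ r : ℝ, 0 ≤ r ∧ (∀ j, ⟪M j, x⟫_ℝ - q j ≤ r) ∧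
      ∀ y, (∀ j, ⟪M j, y⟫_ℝ ≤ q j) → (k + 1 : ℝ) * r < ‖x - y‖ := by
    intro k
    exact hcon (k + 1 : ℝ) (by positivity)
  choose X R hR0 hRres hRfar using h'
  choose p hpP hpvar using fun k => proj (X k)
  set D : ℕ → ℝ := fun k => ‖X k - p k‖ with hDdef
  have hD : ∀ k : ℕ, ((k : ℝ) + 1) * R k < D k := fun k => hRfar k (p k) (hpP k)
  have hDpos : ∀ k, 0 < D k := fun k =>
    lt_of_le_of_lt (mul_nonneg (by positivity) (hR0 k)) (hD k)
  set u : ℕ → E := fun k => (D k)⁻¹ • (X k - p k) with hudef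
  have hunorm : ∀ k, ‖u k‖ = 1 := by
    intro k
    rw [hudef]
    rw [norm_smul, norm_inv, Real.norm_eq_abs, abs_of_pos (hDpos k)]
    exact inv_mul_cancel₀ (ne_of_gt (hDpos k))
  -- active index sets
  set I : ℕ → Set ι := fun k => {j | ⟪M j, p k⟫_ℝ = q j} with hIdef
  obtain ⟨I₀, hI₀⟩ := Finite.exists_infinite_fiber I
  have hS : ∃ᶠ m in Filter.atTop, I m = I₀ := by
    rw [Nat.frequently_atTop_iff_infinite]
    rw [Set.infinite_coe_iff] at hI₀
    exact hI₀
  obtain ⟨φ₁, hφ₁mono, hφ₁⟩ := Filter.extraction_of_frequently_atTop hS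
  -- compactness of the sphere
  have husph : ∀ k, u (φ₁ k) ∈ Metric.sphere (0 : E) 1 := by
    intro k; simp [hunorm]
  obtain ⟨v, hvmem, φ₂, hφ₂mono, hconv⟩ :=
    (isCompact_sphere (0 : E) 1).tendsto_subseq husph
  have hvnorm : ‖v‖ = 1 := by simpa using hvmem
  set ψ : ℕ → ℕ := φ₁ ∘ φ₂ with hψdef
  have hψmono : StrictMono ψ := hφ₁mono.comp hφ₂mono
  have hψI : ∀ k, I (ψ k) = I₀ := fun k => hφ₁ (φ₂ k)
  have hψge : ∀ k, (k : ℕ) ≤ ψ k := fun k => hψmono.le_apply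
  have huψ : Filter.Tendsto (fun k => u (ψ k)) Filter.atTop (nhds v) := hconv
  -- active constraints are asymptotically satisfied by v
  have hactive : ∀ j ∈ I₀, ⟪M j, v⟫_ℝ ≤ 0 := by
    intro j hj
    have key : ∀ k : ℕ, ⟪M j, u (ψ k)⟫_ℝ ≤ 1 / (k + 1 : ℝ) := by
      intro k
      have hjact : ⟪M j, p (ψ k)⟫_ℝ = q j := by
        have := hψI k; rw [hIdef] at this
        exact (Set.ext_iff.1 this j).2 hj
      have hval : ⟪M j, u (ψ k)⟫_ℝ = (D (ψ k))⁻¹ * (⟪M j, X (ψ k)⟫_ℝ - q j) := by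
        rw [hudef]
        rw [real_inner_smul_right, inner_sub_right, hjact]
      rw [hval]
      have h1 : ⟪M j, X (ψ k)⟫_ℝ - q j ≤ R (ψ k) := hRres (ψ k) j
      have h2 : (ψ k + 1 : ℝ) * R (ψ k) ≤ D (ψ k) := le_of_lt (hD (ψ k))
      have h3 : (0:ℝ) < (ψ k : ℝ) + 1 := by positivity
      have h4 : (0:ℝ) < (k : ℝ) + 1 := by positivity
      have h5 : ((k:ℝ) + 1) ≤ ((ψ k : ℝ) + 1) := by
        have := hψge k; exact_mod_cast by exact_mod_cast Nat.add_le_add_right this 1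
      calc (D (ψ k))⁻¹ * (⟪M j, X (ψ k)⟫_ℝ - q j)
          ≤ (D (ψ k))⁻¹ * R (ψ k) :=
            mul_le_mul_of_nonneg_left h1 (le_of_lt (inv_pos.2 (hDpos (ψ k))))
        _ ≤ 1 / ((ψ k : ℝ) + 1) := by
            rw [inv_mul_eq_div, div_le_div_iff₀ (hDpos (ψ k)) h3]
            nlinarith [h2]
        _ ≤ 1 / ((k : ℝ) + 1) := by
            apply one_div_le_one_div_of_le h4 h5
    have hlim : Filter.Tendsto (fun k : ℕ => ⟪M j, u (ψ k)⟫_ℝ)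
        Filter.atTop (nhds (⟪M j, v⟫_ℝ)) :=
      ((continuous_const.inner continuous_id).tendsto v).comp huψ
    have hzero : Filter.Tendsto (fun k : ℕ => 1 / (k + 1 : ℝ))
        Filter.atTop (nhds 0) := tendsto_one_div_add_atTop_nhds_zero_nat
    exact le_of_tendsto_of_tendsto' hlim hzero key
  -- for each k there is a point of P in direction v from p (ψ k)
  have hstep : ∀ k : ℕ, ⟪u (ψ k), v⟫_ℝ ≤ 0 := by
    intro k
    have hev : ∀ᶠ t in nhdsWithin (0:ℝ) (Set.Ioi 0),
        (0 < t ∧ ∀ j, ⟪M j, p (ψ k) + t • v⟫_ℝ ≤ q j) := by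
      apply Filter.Eventually.and
      · exact eventually_mem_nhdsWithin
      · rw [Filter.eventually_all]
        intro j
        by_cases hj : j ∈ I₀
        · have hjact : ⟪M j, p (ψ k)⟫_ℝ = q j := by
            have := hψI k; rw [hIdef] at this
            exact (Set.ext_iff.1 this j).2 hj
          have hMv : ⟪M j, v⟫_ℝ ≤ 0 := hactive j hj
          filter_upwards [eventually_mem_nhdsWithin] with t ht
          rw [inner_add_right, real_inner_smul_right, hjact]
          have : 0 < t := ht
          nlinarith
        · have hjlt : ⟪M j, p (ψ k)⟫_ℝ < q j := by
            have hle := hpP (ψ k) j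
            have hne2 : ⟪M j, p (ψ k)⟫_ℝ ≠ q j := by
              intro hc
              exact hj (by rw [← hψI k, hIdef]; exact hc)
            exact lt_of_le_of_ne hle hne2
          have hcont : Filter.Tendsto (fun t : ℝ => ⟪M j, p (ψ k) + t • v⟫_ℝ)
              (nhdsWithin (0:ℝ) (Set.Ioi 0)) (nhds (⟪M j, p (ψ k)⟫_ℝ)) := by
            have : Continuous (fun t : ℝ => ⟪M j, p (ψ k) + t • v⟫_ℝ) :=
              continuous_const.inner (continuous_const.add (continuous_id.smul continuous_const))
            have h0 := this.tendsto 0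
            simp only [zero_smul, add_zero] at h0
            exact h0.mono_left nhdsWithin_le_nhds
          have := hcont.eventually_lt_const hjlt
          filter_upwards [this] with t ht using le_of_lt ht
    obtain ⟨t, ht0, htP⟩ := hev.exists
    have hz : p (ψ k) + t • v ∈ P := htP
    have hvar := hpvar (ψ k) _ hz
    rw [add_sub_cancel_left] at hvar
    rw [real_inner_smul_right] at hvar
    have : ⟪X (ψ k) - p (ψ k), v⟫_ℝ ≤ 0 := nonpos_of_mul_nonpos_right hvar ht0
    rw [hudef]
    rw [real_inner_smul_left]
    exact mul_nonpos_of_nonneg_of_nonpos (le_of_lt (inv_pos.2 (hDpos (ψ k)))) this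
  -- contradiction
  have hlim2 : Filter.Tendsto (fun k : ℕ => ⟪u (ψ k), v⟫_ℝ)
      Filter.atTop (nhds (⟪v, v⟫_ℝ)) :=
    ((continuous_id.inner continuous_const).tendsto v).comp huψ
  have : ⟪v, v⟫_ℝ ≤ 0 := le_of_tendsto hlim2 (Filter.Eventually.of_forall hstep)
  rw [real_inner_self_eq_norm_sq, hvnorm] at this
  norm_num at this


lemma small_t_lemma (a c ε : ℝ) (hε : 0 < ε)
    (h : ∀ t : ℝ, 0 < t → t ≤ ε → 0 ≤ t * c + t ^ 2 * a) : 0 ≤ c := by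
  by_contra hc
  push_neg at hc
  set t := min ε (-c / (|a| + 1)) with ht
  have h0 : 0 < -c / (|a| + 1) := div_pos (neg_pos.2 hc) (by positivity)
  have htpos : 0 < t := lt_min hε h0
  have ht1 : t ≤ ε := min_le_left _ _
  have ht2 : t ≤ -c / (|a| + 1) := min_le_right _ _
  have hkey := h t htpos ht1
  have h3 : t * (|a| + 1) ≤ -c := (le_div_iff₀ (by positivity)).1 ht2
  have hta : t * a ≤ t * |a| := mul_le_mul_of_nonneg_left (le_abs_self a) (le_of_lt htpos)
  nlinarith [mul_le_mul_of_nonneg_left hta (le_of_lt htpos), mul_pos htpos htpos,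
    mul_le_mul_of_nonneg_left h3 (le_of_lt htpos)]

lemma cross_symm {n : ℕ} (A : Matrix (Fin n) (Fin n) ℝ) (hs : Aᵀ = A) (u w : Fin n → ℝ) :
    u ⬝ᵥ A.mulVec w = w ⬝ᵥ A.mulVec u := by
  rw [Matrix.dotProduct_mulVec, ← Matrix.mulVec_transpose, hs, dotProduct_comm]

lemma quad_expand {n : ℕ} (A : Matrix (Fin n) (Fin n) ℝ) (b : Fin n → ℝ) (hs : Aᵀ = A)
    (u w : Fin n → ℝ) :
    quadObj A b (u + w) = quadObj A b u + (A.mulVec u - b) ⬝ᵥ w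
      + (1 / 2) * (w ⬝ᵥ A.mulVec w) := by
  have hcross : u ⬝ᵥ A.mulVec w = w ⬝ᵥ A.mulVec u := cross_symm A hs u w
  simp only [quadObj, Matrix.mulVec_add, dotProduct_add, add_dotProduct,
    sub_dotProduct]
  rw [hcross, dotProduct_comm (A *ᵥ u) w]; ring

lemma l1_expand {n : ℕ} (A : Matrix (Fin n) (Fin n) ℝ) (b : Fin n → ℝ) (τ : ℝ) (hs : Aᵀ = A)
    (u w : Fin n → ℝ) :
    l1QuadObj A b τ (u + w) = quadObj A b u + (A.mulVec u - b) ⬝ᵥ w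
      + (1 / 2) * (w ⬝ᵥ A.mulVec w) + τ * ∑ i, |u i + w i| := by
  simp only [l1QuadObj, quad_expand A b hs u w, Pi.add_apply]

lemma discrim_le (a c q : ℝ) (hc : 0 ≤ c) (h : ∀ t : ℝ, 0 ≤ a + 2 * q * t + c * t ^ 2) :
    q ^ 2 ≤ a * c := by
  have ha := by simpa using h 0
  rcases hc.eq_or_lt with h0 | hpos
  · have hq : q = 0 := by
      by_contra hq
      have h2 := h (-(a + 1) / (2 * q))
      rw [← h0] at h2
      have e : 2 * q * (-(a + 1) / (2 * q)) = -(a + 1) := by field_simp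
      rw [e] at h2
      nlinarith [h2]
    rw [hq, ← h0]; simp
  · have h2 := h (-q / c)
    have he : a + 2 * q * (-q / c) + c * (-q / c) ^ 2 = a - q ^ 2 / c := by
      field_simp; ring
    rw [he] at h2
    have : q ^ 2 / c ≤ a := by linarith
    calc q ^ 2 = (q ^ 2 / c) * c := by field_simp
      _ ≤ a * c := mul_le_mul_of_nonneg_right this (le_of_lt hpos)

lemma psd_dot_nonneg {n : ℕ} {A : Matrix (Fin n) (Fin n) ℝ} (hA : A.PosSemidef)
    (u : Fin n → ℝ) : 0 ≤ u ⬝ᵥ A.mulVec u := by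
  simpa using hA.dotProduct_mulVec_nonneg u

lemma cs_psd {n : ℕ} (A : Matrix (Fin n) (Fin n) ℝ) (hA : A.PosSemidef) (hs : Aᵀ = A)
    (u w : Fin n → ℝ) :
    (u ⬝ᵥ A.mulVec w) ^ 2 ≤ (u ⬝ᵥ A.mulVec u) * (w ⬝ᵥ A.mulVec w) := by
  apply discrim_le _ _ _ (psd_dot_nonneg hA w)
  intro t
  have h' : 0 ≤ (u + t • w) ⬝ᵥ A.mulVec (u + t • w) := psd_dot_nonneg hA _
  have hexp : (u + t • w) ⬝ᵥ A.mulVec (u + t • w)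
      = (u ⬝ᵥ A.mulVec u) + 2 * (u ⬝ᵥ A.mulVec w) * t + (w ⬝ᵥ A.mulVec w) * t ^ 2 := by
    rw [Matrix.mulVec_add, Matrix.mulVec_smul]
    simp only [dotProduct_add, add_dotProduct, dotProduct_smul,
      smul_dotProduct, smul_eq_mul]
    rw [cross_symm A hs w u]
    ring
  rw [hexp] at h'
  exact h'

lemma dot_self_nonneg {n : ℕ} (u : Fin n → ℝ) : 0 ≤ u ⬝ᵥ u :=
  Finset.sum_nonneg fun i _ => mul_self_nonneg (u i)

lemma quad_dom {n : ℕ} (A : Matrix (Fin n) (Fin n) ℝ) (u : Fin n → ℝ) :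
    u ⬝ᵥ A.mulVec u ≤ (∑ i, ∑ j, |A i j|) * (u ⬝ᵥ u) := by
  have key : ∀ i j : Fin n, u i * (A i j * u j) ≤ |A i j| * (u ⬝ᵥ u) := by
    intro i j
    have h1 : u i ^ 2 ≤ u ⬝ᵥ u := by
      have := Finset.single_le_sum (f := fun k => u k * u k)
        (fun k _ => mul_self_nonneg (u k)) (Finset.mem_univ i)
      simpa [dotProduct, sq] using this
    have h2 : u j ^ 2 ≤ u ⬝ᵥ u := by
      have := Finset.single_le_sum (f := fun k => u k * u k)
        (fun k _ => mul_self_nonneg (u k)) (Finset.mem_univ j)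
      simpa [dotProduct, sq] using this
    calc u i * (A i j * u j) ≤ |u i * (A i j * u j)| := le_abs_self _
      _ = |A i j| * (|u i| * |u j|) := by rw [abs_mul, abs_mul]; ring
      _ ≤ |A i j| * (u ⬝ᵥ u) := by
          apply mul_le_mul_of_nonneg_left _ (abs_nonneg _)
          nlinarith [sq_abs (u i), sq_abs (u j), sq_nonneg (|u i| - |u j|),
            abs_nonneg (u i), abs_nonneg (u j)]
  calc u ⬝ᵥ A.mulVec u = ∑ i, ∑ j, u i * (A i j * u j) := by
        simp [dotProduct, Matrix.mulVec, Finset.mul_sum]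
    _ ≤ ∑ i, ∑ j, |A i j| * (u ⬝ᵥ u) :=
        Finset.sum_le_sum fun i _ => Finset.sum_le_sum fun j _ => key i j
    _ = (∑ i, ∑ j, |A i j|) * (u ⬝ᵥ u) := by
        rw [Finset.sum_mul]
        exact Finset.sum_congr rfl fun i _ => by rw [Finset.sum_mul]

lemma AdAd_le {n : ℕ} (A : Matrix (Fin n) (Fin n) ℝ) (hA : A.PosSemidef) (hs : Aᵀ = A)
    (d : Fin n → ℝ) :
    (A.mulVec d) ⬝ᵥ (A.mulVec d) ≤ (∑ i, ∑ j, |A i j|) * (d ⬝ᵥ A.mulVec d) := by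
  set cA := ∑ i, ∑ j, |A i j| with hcA
  have hcA0 : 0 ≤ cA := Finset.sum_nonneg fun i _ => Finset.sum_nonneg fun j _ => abs_nonneg _
  set S := (A.mulVec d) ⬝ᵥ (A.mulVec d) with hS
  have hS0 : 0 ≤ S := dot_self_nonneg _
  have h1 : d ⬝ᵥ A.mulVec (A.mulVec d) = S := by
    rw [Matrix.dotProduct_mulVec, ← Matrix.mulVec_transpose, hs]
  have h2 := cs_psd A hA hs d (A.mulVec d)
  rw [h1] at h2
  have h3 := quad_dom A (A.mulVec d)
  have hdAd := psd_dot_nonneg hA d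
  rcases hS0.eq_or_lt with h | h
  · rw [← h]; exact mul_nonneg hcA0 hdAd
  · nlinarith [h2, h3, hdAd, h]

lemma r_facts (τ g y : ℝ) (hg : |g| ≤ τ) :
    0 ≤ τ * |y| + g * y ∧ (τ + g) * y ≤ τ * |y| + g * y ∧ (g - τ) * y ≤ τ * |y| + g * y ∧
      ((τ + g) * y ≤ 0 → (g - τ) * y ≤ 0 → τ * |y| + g * y = 0) := by
  obtain ⟨hg1, hg2⟩ := abs_le.1 hg
  rcases le_total 0 y with hy | hy
  · rw [abs_of_nonneg hy]
    refine ⟨by nlinarith, by nlinarith, by nlinarith, fun h1 _ => by nlinarith⟩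
  · rw [abs_of_nonpos hy]
    refine ⟨by nlinarith, by nlinarith, by nlinarith, fun _ h2 => by nlinarith⟩

lemma single_var {n : ℕ} (A : Matrix (Fin n) (Fin n) ℝ) (b : Fin n → ℝ) (τ : ℝ)
    (hs : Aᵀ = A) (xs : Fin n → ℝ) (i : Fin n) (t : ℝ) :
    l1QuadObj A b τ (xs + Pi.single i t) - l1QuadObj A b τ xs
      = t * ((A.mulVec xs - b) i) + t ^ 2 * (A i i / 2) + τ * (|xs i + t| - |xs i|) := by
  have hexp := l1_expand A b τ hs xs (Pi.single i t)
  have hdot : (A.mulVec xs - b) ⬝ᵥ Pi.single i t = (A.mulVec xs - b) i * t := by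
    simp [dotProduct_single]
  have hquad : (Pi.single i t : Fin n → ℝ) ⬝ᵥ A.mulVec (Pi.single i t) = t * (A i i * t) := by
    simp [Matrix.mulVec_single, single_dotProduct, mul_comm]
  have hsum : (∑ j, |xs j + (Pi.single i t : Fin n → ℝ) j|) - ∑ j, |xs j| = |xs i + t| - |xs i| := by
    rw [← Finset.sum_sub_distrib, Finset.sum_eq_single i]
    · simp
    · intro j _ hj
      simp [Pi.single_eq_of_ne hj]
    · intro h; exact absurd (Finset.mem_univ i) h
  have hFx : l1QuadObj A b τ xs = quadObj A b xs + τ * ∑ j, |xs j| := rfl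
  rw [hexp, hFx]
  have : (∑ j, |xs j + (Pi.single i t : Fin n → ℝ) j|) = |xs i + t| - |xs i| + ∑ j, |xs j| := by
    linarith [hsum]
  rw [this, hdot, hquad]
  ring

lemma opt_facts {n : ℕ} (A : Matrix (Fin n) (Fin n) ℝ) (b : Fin n → ℝ) (τ : ℝ)
    (hτ : 0 ≤ τ) (hs : Aᵀ = A) (xs : Fin n → ℝ) (Fstar : ℝ)
    (hxstar : l1QuadObj A b τ xs = Fstar) (hmin : ∀ y, Fstar ≤ l1QuadObj A b τ y) :
    ∀ i, |(A.mulVec xs - b) i| ≤ τ ∧ (A.mulVec xs - b) i * xs i = -(τ * |xs i|) := by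
  intro i
  set g := (A.mulVec xs - b) i with hg
  have hQ : ∀ t : ℝ, 0 ≤ t * g + t ^ 2 * (A i i / 2) + τ * (|xs i + t| - |xs i|) := by
    intro t
    have h := hmin (xs + Pi.single i t)
    rw [← hxstar] at h
    have := single_var A b τ hs xs i t
    rw [hxstar] at this
    linarith [this, h, hxstar ▸ h]
  rcases lt_trichotomy (xs i) 0 with hx | hx | hx
  · have h1 : 0 ≤ τ - g := by
      apply small_t_lemma (A i i / 2) _ 1 one_pos
      intro s hs0 hs1
      have h := hQ (-s)
      have habs : |xs i + -s| = -(xs i + -s) := abs_of_neg (by linarith)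
      have habs2 : |xs i| = -(xs i) := abs_of_neg hx
      rw [habs, habs2] at h
      nlinarith [h]
    have h2 : 0 ≤ g - τ := by
      apply small_t_lemma (A i i / 2) _ (-(xs i)) (by linarith)
      intro s hs0 hs1
      have h := hQ s
      have habs : |xs i + s| = -(xs i + s) := abs_of_nonpos (by linarith)
      have habs2 : |xs i| = -(xs i) := abs_of_neg hx
      rw [habs, habs2] at h
      nlinarith [h]
    have hgτ : g = τ := by linarith
    refine ⟨by rw [hgτ, abs_of_nonneg hτ], ?_⟩
    rw [hgτ, abs_of_neg hx]; ring
  · have h1 : 0 ≤ g + τ := by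
      apply small_t_lemma (A i i / 2) _ 1 one_pos
      intro s hs0 hs1
      have h := hQ s
      rw [hx] at h
      have habs : |(0:ℝ) + s| = s := by rw [zero_add, abs_of_pos hs0]
      rw [habs] at h
      simp only [abs_zero] at h
      nlinarith [h]
    have h2 : 0 ≤ τ - g := by
      apply small_t_lemma (A i i / 2) _ 1 one_pos
      intro s hs0 hs1
      have h := hQ (-s)
      rw [hx] at h
      have habs : |(0:ℝ) + -s| = s := by rw [zero_add, abs_neg, abs_of_pos hs0]
      rw [habs] at h
      simp only [abs_zero] at h
      nlinarith [h]
    refine ⟨abs_le.2 ⟨by linarith, by linarith⟩, ?_⟩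
    rw [hx]; simp
  · have h1 : 0 ≤ -g - τ := by
      apply small_t_lemma (A i i / 2) _ (xs i) hx
      intro s hs0 hs1
      have h := hQ (-s)
      have habs : |xs i + -s| = xs i + -s := abs_of_nonneg (by linarith)
      have habs2 : |xs i| = xs i := abs_of_pos hx
      rw [habs, habs2] at h
      nlinarith [h]
    have h2 : 0 ≤ g + τ := by
      apply small_t_lemma (A i i / 2) _ 1 one_pos
      intro s hs0 hs1
      have h := hQ s
      have habs : |xs i + s| = xs i + s := abs_of_nonneg (by linarith)
      have habs2 : |xs i| = xs i := abs_of_pos hx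
      rw [habs, habs2] at h
      nlinarith [h]
    have hgτ : g = -τ := by linarith
    refine ⟨by rw [hgτ, abs_neg, abs_of_nonneg hτ], ?_⟩
    rw [hgτ, abs_of_pos hx]; ring

lemma gap_identity {n : ℕ} (A : Matrix (Fin n) (Fin n) ℝ) (b : Fin n → ℝ) (τ : ℝ)
    (hs : Aᵀ = A) (xs : Fin n → ℝ) (Fstar : ℝ)
    (hxstar : l1QuadObj A b τ xs = Fstar)
    (hopt : ∀ i, (A.mulVec xs - b) i * xs i = -(τ * |xs i|)) (y : Fin n → ℝ) :
    l1QuadObj A b τ y - Fstar = (1 / 2) * ((y - xs) ⬝ᵥ A.mulVec (y - xs))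
      + ∑ i, (τ * |y i| + (A.mulVec xs - b) i * y i) := by
  have hexp := l1_expand A b τ hs xs (y - xs)
  have hy : xs + (y - xs) = y := by ring
  rw [hy] at hexp
  simp only [show ∀ i, xs i + (y - xs) i = y i from fun i => by simp [Pi.sub_apply]] at hexp
  have hdot : (A.mulVec xs - b) ⬝ᵥ (y - xs)
      = (∑ i, (A.mulVec xs - b) i * y i) + τ * ∑ i, |xs i| := by
    simp only [dotProduct]
    have hterm : ∀ i : Fin n, (A.mulVec xs - b) i * (y - xs) i
        = (A.mulVec xs - b) i * y i - (A.mulVec xs - b) i * xs i := fun i => by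
      simp [Pi.sub_apply]; ring
    rw [Finset.sum_congr rfl fun i _ => hterm i, Finset.sum_sub_distrib]
    have h2 : ∑ i, (A.mulVec xs - b) i * xs i = -(τ * ∑ i, |xs i|) := by
      rw [Finset.mul_sum, ← Finset.sum_neg_distrib]
      exact Finset.sum_congr rfl fun i _ => hopt i
    rw [h2]; ring
  have hsum : ∑ i, (τ * |y i| + (A.mulVec xs - b) i * y i)
      = τ * (∑ i, |y i|) + ∑ i, (A.mulVec xs - b) i * y i := by
    rw [Finset.sum_add_distrib, Finset.mul_sum]
  have hFs : Fstar = quadObj A b xs + τ * ∑ i, |xs i| := by rw [← hxstar]; rfl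
  rw [hexp, hdot, hsum, hFs]
  ring

lemma coord_subgrad (τ g xi yi vc : ℝ) (hτ : 0 ≤ τ)
    (hvc : vc = if xi ≠ 0 then g + τ * Real.sign xi else min (g + τ) (max 0 (g - τ))) :
    vc * (yi - xi) ≤ g * (yi - xi) + τ * |yi| - τ * |xi| := by
  by_cases hxi : xi = 0
  · subst hxi
    rw [if_neg (by simp)] at hvc
    have h1 : |g - vc| ≤ τ := by
      rcases le_total (g - τ) 0 with h | h
      · rw [max_eq_left h] at hvc
        rcases le_total (g + τ) 0 with h' | h'
        · rw [min_eq_left h'] at hvc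
          rw [hvc]; rw [show g - (g + τ) = -τ by ring, abs_neg, abs_of_nonneg hτ]
        · rw [min_eq_right h'] at hvc
          rw [hvc, sub_zero]; exact abs_le.2 ⟨by linarith, by linarith⟩
      · have hle : g - τ ≤ g + τ := by linarith
        rw [max_eq_right h, min_eq_right hle] at hvc
        rw [hvc, show g - (g - τ) = τ by ring, abs_of_nonneg hτ]
    have k1 : -(|g - vc| * |yi|) ≤ (g - vc) * yi := by
      rw [← abs_mul]; exact neg_abs_le _
    have k2 : |g - vc| * |yi| ≤ τ * |yi| := mul_le_mul_of_nonneg_right h1 (abs_nonneg yi)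
    simp only [abs_zero, sub_zero]
    nlinarith [k1, k2]
  · rw [if_pos hxi] at hvc
    rcases lt_trichotomy xi 0 with hx | hx | hx
    · rw [Real.sign_of_neg hx] at hvc
      rw [hvc, abs_of_neg hx]
      have : -yi ≤ |yi| := neg_le_abs yi
      nlinarith [mul_le_mul_of_nonneg_left this hτ]
    · exact absurd hx hxi
    · rw [Real.sign_of_pos hx] at hvc
      rw [hvc, abs_of_pos hx]
      have : yi ≤ |yi| := le_abs_self yi
      nlinarith [mul_le_mul_of_nonneg_left this hτ]


lemma subgrad_ineq {n : ℕ} (A : Matrix (Fin n) (Fin n) ℝ) (b : Fin n → ℝ) (τ : ℝ)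
    (hA : A.PosSemidef) (hs : Aᵀ = A) (hτ : 0 ≤ τ) (x y : Fin n → ℝ) :
    l1QuadObj A b τ x + (minSubgrad A b τ x) ⬝ᵥ (y - x) ≤ l1QuadObj A b τ y := by
  have hexp := l1_expand A b τ hs x (y - x)
  have hy : x + (y - x) = y := by ring
  rw [hy] at hexp
  simp only [show ∀ i, x i + (y - x) i = y i from fun i => by simp [Pi.sub_apply]] at hexp
  have hq : 0 ≤ (y - x) ⬝ᵥ A.mulVec (y - x) := psd_dot_nonneg hA _
  have hcoord : ∀ i : Fin n, (minSubgrad A b τ x) i * ((y - x) i)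
      ≤ (A.mulVec x - b) i * ((y - x) i) + τ * |y i| - τ * |x i| := by
    intro i
    have := coord_subgrad τ ((A.mulVec x - b) i) (x i) (y i) ((minSubgrad A b τ x) i) hτ rfl
    simpa [Pi.sub_apply] using this
  have hsum : (minSubgrad A b τ x) ⬝ᵥ (y - x)
      ≤ (A.mulVec x - b) ⬝ᵥ (y - x) + τ * (∑ i, |y i|) - τ * ∑ i, |x i| := by
    have := Finset.sum_le_sum fun i (_ : i ∈ Finset.univ) => hcoord i
    simp only [dotProduct]
    calc ∑ i, (minSubgrad A b τ x) i * ((y - x) i)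
        ≤ ∑ i, ((A.mulVec x - b) i * ((y - x) i) + τ * |y i| - τ * |x i|) := this
      _ = (∑ i, (A.mulVec x - b) i * ((y - x) i)) + τ * (∑ i, |y i|) - τ * ∑ i, |x i| := by
          rw [Finset.sum_sub_distrib, Finset.sum_add_distrib, Finset.mul_sum, Finset.mul_sum]
  have hFx : l1QuadObj A b τ x = quadObj A b x + τ * ∑ j, |x j| := rfl
  rw [hexp, hFx]
  linarith [hsum, hq]

noncomputable def toE {n : ℕ} (a : Fin n → ℝ) : EuclideanSpace ℝ (Fin n) :=
  (WithLp.equiv 2 (Fin n → ℝ)).symm a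

lemma innerE {n : ℕ} (a c : Fin n → ℝ) : ⟪toE a, toE c⟫_ℝ = a ⬝ᵥ c := by
  simp [toE, PiLp.inner_apply, RCLike.inner_apply, dotProduct,
    PiLp.toLp_apply, mul_comm]

lemma normE {n : ℕ} (a : Fin n → ℝ) : ‖toE a‖ ^ 2 = a ⬝ᵥ a := by
  rw [← real_inner_self_eq_norm_sq, innerE]

lemma toE_sub {n : ℕ} (a c : Fin n → ℝ) : toE (a - c) = toE a - toE c := rfl
set_option maxHeartbeats 2000000 in
/-- for any `δ ≥ 0` there is `η > 0` with
`F(x) − F* ≤ η ‖v(x)‖²` whenever `F(x) − F* ≤ δ`. -/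
theorem stmt1 {n : ℕ} (A : Matrix (Fin n) (Fin n) ℝ) (b : Fin n → ℝ) (τ : ℝ)
    (hA : A.PosSemidef) (hτ : 0 ≤ τ)
    (Fstar : ℝ) (xstar : Fin n → ℝ)
    (hxstar : l1QuadObj A b τ xstar = Fstar)
    (hmin : ∀ y, Fstar ≤ l1QuadObj A b τ y) :
    ∀ δ : ℝ, 0 ≤ δ → ∃ η > 0, ∀ x : Fin n → ℝ,
      l1QuadObj A b τ x - Fstar ≤ δ →
      l1QuadObj A b τ x - Fstar ≤
        η * (minSubgrad A b τ x ⬝ᵥ minSubgrad A b τ x) := by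
  classical
  intro δ hδ
  have hs : Aᵀ = A := by
    have h := hA.1
    rwa [Matrix.IsHermitian, Matrix.conjTranspose_eq_transpose_of_trivial] at h
  have hopt := opt_facts A b τ hτ hs xstar Fstar hxstar hmin
  set cA := ∑ i, ∑ j, |A i j| with hcA
  have hcA0 : 0 ≤ cA :=
    Finset.sum_nonneg fun i _ => Finset.sum_nonneg fun j _ => abs_nonneg _
  set gb : Fin n → ℝ := A.mulVec xstar - b with hgb
  -- the constraint system describing the solution set
  set M : (Fin n ⊕ Fin n) ⊕ (Fin n ⊕ Fin n) → EuclideanSpace ℝ (Fin n) :=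
    Sum.elim
      (Sum.elim (fun j => toE (fun i => A j i)) (fun j => toE (fun i => -(A j i))))
      (Sum.elim (fun i => toE (Pi.single i (τ + gb i)))
        (fun i => toE (Pi.single i (gb i - τ)))) with hM
  set q : (Fin n ⊕ Fin n) ⊕ (Fin n ⊕ Fin n) → ℝ :=
    Sum.elim
      (Sum.elim (fun j => (A.mulVec xstar) j) (fun j => -((A.mulVec xstar) j)))
      (Sum.elim (fun _ => (0:ℝ)) (fun _ => (0:ℝ))) with hq
  have hMrow1 : ∀ (j : Fin n) (w : Fin n → ℝ),
      ⟪M (Sum.inl (Sum.inl j)), toE w⟫_ℝ = (A.mulVec w) j := by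
    intro j w
    rw [hM]
    simp only [Sum.elim_inl]
    rw [innerE]
    simp [Matrix.mulVec, dotProduct]
  have hMrow2 : ∀ (j : Fin n) (w : Fin n → ℝ),
      ⟪M (Sum.inl (Sum.inr j)), toE w⟫_ℝ = -((A.mulVec w) j) := by
    intro j w
    rw [hM]
    simp only [Sum.elim_inl, Sum.elim_inr]
    rw [innerE]
    simp [Matrix.mulVec, dotProduct]
  have hMrow3 : ∀ (i : Fin n) (w : Fin n → ℝ),
      ⟪M (Sum.inr (Sum.inl i)), toE w⟫_ℝ = (τ + gb i) * w i := by
    intro i w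
    rw [hM]
    simp only [Sum.elim_inl, Sum.elim_inr]
    rw [innerE]
    simp [single_dotProduct]
  have hMrow4 : ∀ (i : Fin n) (w : Fin n → ℝ),
      ⟪M (Sum.inr (Sum.inr i)), toE w⟫_ℝ = (gb i - τ) * w i := by
    intro i w
    rw [hM]
    simp only [Sum.elim_inr]
    rw [innerE]
    simp [single_dotProduct]
  have hqr1 : ∀ j : Fin n, q (Sum.inl (Sum.inl j)) = (A.mulVec xstar) j := fun j => rfl
  have hqr2 : ∀ j : Fin n, q (Sum.inl (Sum.inr j)) = -((A.mulVec xstar) j) := fun j => rfl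
  have hqr3 : ∀ i : Fin n, q (Sum.inr (Sum.inl i)) = 0 := fun i => rfl
  have hqr4 : ∀ i : Fin n, q (Sum.inr (Sum.inr i)) = 0 := fun i => rfl
  have hxs0 : ∀ i, τ * |xstar i| + gb i * xstar i = 0 := by
    intro i
    rw [hgb, (hopt i).2]
    ring
  have hne : ∃ yE : EuclideanSpace ℝ (Fin n), ∀ row, ⟪M row, yE⟫_ℝ ≤ q row := by
    refine ⟨toE xstar, ?_⟩
    rintro ((j | j) | (i | i))
    · rw [hMrow1, hqr1]
    · rw [hMrow2, hqr2]
    · rw [hMrow3, hqr3]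
      have h2 := (r_facts τ (gb i) (xstar i) (hopt i).1).2.1
      linarith [hxs0 i]
    · rw [hMrow4, hqr4]
      have h2 := (r_facts τ (gb i) (xstar i) (hopt i).1).2.2.1
      linarith [hxs0 i]
  obtain ⟨K, hK, hKspec⟩ := hoffman M q hne
  set C := Real.sqrt (2 * cA) + Real.sqrt δ with hC
  have hC0 : 0 ≤ C := by positivity
  refine ⟨K ^ 2 * C ^ 2 + 1, by positivity, ?_⟩
  intro x hxδ
  set v := minSubgrad A b τ x with hv
  have hvv0 : 0 ≤ v ⬝ᵥ v := dot_self_nonneg v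
  set gap := l1QuadObj A b τ x - Fstar with hgap
  have hgap0 : 0 ≤ gap := by
    have := hmin x
    rw [hgap]
    linarith
  have hid := gap_identity A b τ hs xstar Fstar hxstar (fun i => (hopt i).2) x
  rw [← hgap, ← hgb] at hid
  set d := x - xstar with hd
  have hrsum0 : ∀ i, 0 ≤ τ * |x i| + gb i * x i := fun i =>
    (r_facts τ (gb i) (x i) (hopt i).1).1
  have hquad0 : 0 ≤ d ⬝ᵥ A.mulVec d := psd_dot_nonneg hA d
  have hquad2 : d ⬝ᵥ A.mulVec d ≤ 2 * gap := by
    have hsumnn : 0 ≤ ∑ i, (τ * |x i| + gb i * x i) :=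
      Finset.sum_nonneg fun i _ => hrsum0 i
    linarith [hid]
  have hAd : (A.mulVec d) ⬝ᵥ (A.mulVec d) ≤ 2 * cA * gap := by
    have h1 := AdAd_le A hA hs d
    rw [← hcA] at h1
    nlinarith [h1, hquad2, hcA0]
  have hri : ∀ i, τ * |x i| + gb i * x i ≤ gap := by
    intro i
    have hsingle := Finset.single_le_sum (f := fun i => τ * |x i| + gb i * x i)
      (fun i _ => hrsum0 i) (Finset.mem_univ i)
    linarith [hid, hquad0]
  set r := Real.sqrt (2 * cA * gap) + gap with hr
  have hr0 : 0 ≤ r := by positivity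
  have hrC : r ≤ C * Real.sqrt gap := by
    have h1 : Real.sqrt (2 * cA * gap) = Real.sqrt (2 * cA) * Real.sqrt gap :=
      Real.sqrt_mul (by positivity) _
    have hle : Real.sqrt gap ≤ Real.sqrt δ := Real.sqrt_le_sqrt hxδ
    have h2 : gap ≤ Real.sqrt δ * Real.sqrt gap := by
      nlinarith [Real.sqrt_nonneg gap, hle, Real.mul_self_sqrt hgap0]
    rw [hr, h1, hC, add_mul]
    linarith
  have hAdj : ∀ j, |(A.mulVec d) j| ≤ Real.sqrt (2 * cA * gap) := by
    intro j
    have h1 : (A.mulVec d) j * (A.mulVec d) j ≤ (A.mulVec d) ⬝ᵥ (A.mulVec d) :=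
      Finset.single_le_sum (f := fun k => (A.mulVec d) k * (A.mulVec d) k)
        (fun k _ => mul_self_nonneg _) (Finset.mem_univ j)
    rw [← Real.sqrt_mul_self_eq_abs]
    exact Real.sqrt_le_sqrt (by linarith)
  have hdmul : ∀ j : Fin n, (A.mulVec x) j - (A.mulVec xstar) j = (A.mulVec d) j := by
    intro j
    rw [hd, Matrix.mulVec_sub]
    simp [Pi.sub_apply]
  have hres : ∀ row, ⟪M row, toE x⟫_ℝ - q row ≤ r := by
    rintro ((j | j) | (i | i))
    · rw [hMrow1, hqr1]
      have h2 := hAdj j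
      have h3 := le_abs_self ((A.mulVec d) j)
      rw [hr]
      linarith [hdmul j, hgap0]
    · rw [hMrow2, hqr2]
      have h2 := hAdj j
      have h3 := neg_le_abs ((A.mulVec d) j)
      rw [hr]
      linarith [hdmul j, hgap0]
    · rw [hMrow3, hqr3]
      have h2 := (r_facts τ (gb i) (x i) (hopt i).1).2.1
      rw [hr]
      linarith [hri i, Real.sqrt_nonneg (2 * cA * gap)]
    · rw [hMrow4, hqr4]
      have h2 := (r_facts τ (gb i) (x i) (hopt i).1).2.2.1
      rw [hr]
      linarith [hri i, Real.sqrt_nonneg (2 * cA * gap)]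
  obtain ⟨yE, hyP, hydist⟩ := hKspec (toE x) r hr0 hres
  set y := (WithLp.equiv 2 (Fin n → ℝ)) yE with hy
  have hyE : toE y = yE := by
    rw [hy, toE]
    exact (WithLp.equiv 2 (Fin n → ℝ)).symm_apply_apply yE
  have hymin : l1QuadObj A b τ y = Fstar := by
    have hAy : A.mulVec y = A.mulVec xstar := by
      funext j
      have h1 := hyP (Sum.inl (Sum.inl j))
      rw [← hyE, hMrow1, hqr1] at h1
      have h2 := hyP (Sum.inl (Sum.inr j))
      rw [← hyE, hMrow2, hqr2] at h2
      exact le_antisymm h1 (by linarith)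
    have hry : ∀ i, τ * |y i| + gb i * y i = 0 := by
      intro i
      have h3 := hyP (Sum.inr (Sum.inl i))
      rw [← hyE, hMrow3, hqr3] at h3
      have h4 := hyP (Sum.inr (Sum.inr i))
      rw [← hyE, hMrow4, hqr4] at h4
      exact (r_facts τ (gb i) (y i) (hopt i).1).2.2.2 h3 h4
    have hidy := gap_identity A b τ hs xstar Fstar hxstar (fun i => (hopt i).2) y
    rw [← hgb] at hidy
    have hq0 : (y - xstar) ⬝ᵥ A.mulVec (y - xstar) = 0 := by
      rw [Matrix.mulVec_sub, hAy, sub_self, dotProduct_zero]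
    have hsz : ∑ i, (τ * |y i| + gb i * y i) = 0 :=
      Finset.sum_eq_zero fun i _ => hry i
    rw [hq0, hsz] at hidy
    linarith [hidy]
  have hsub := subgrad_ineq A b τ hA hs hτ x y
  rw [hymin] at hsub
  have hgap_le : gap ≤ v ⬝ᵥ (x - y) := by
    have hneg : v ⬝ᵥ (x - y) = -(v ⬝ᵥ (y - x)) := by
      rw [show x - y = -(y - x) by ring, dotProduct_neg]
    rw [hneg, hgap]
    rw [← hv] at hsub
    linarith
  have hCS : v ⬝ᵥ (x - y) ≤ Real.sqrt (v ⬝ᵥ v) * (K * r) := by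
    have h1 : v ⬝ᵥ (x - y) = ⟪toE v, toE x - toE y⟫_ℝ := by
      rw [← toE_sub, innerE]
    have h2 := real_inner_le_norm (toE v) (toE x - toE y)
    have h3 : ‖toE v‖ = Real.sqrt (v ⬝ᵥ v) := by
      rw [← normE v, Real.sqrt_sq (norm_nonneg _)]
    have h4 : ‖toE x - toE y‖ ≤ K * r := by
      rw [hyE]
      exact hydist
    calc v ⬝ᵥ (x - y) = ⟪toE v, toE x - toE y⟫_ℝ := h1
      _ ≤ ‖toE v‖ * ‖toE x - toE y‖ := h2
      _ ≤ Real.sqrt (v ⬝ᵥ v) * (K * r) := by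
          rw [h3]
          exact mul_le_mul_of_nonneg_left h4 (Real.sqrt_nonneg _)
  have hfinal : gap ≤ Real.sqrt (v ⬝ᵥ v) * K * (C * Real.sqrt gap) := by
    have hmono : Real.sqrt (v ⬝ᵥ v) * (K * r)
        ≤ Real.sqrt (v ⬝ᵥ v) * (K * (C * Real.sqrt gap)) := by
      apply mul_le_mul_of_nonneg_left _ (Real.sqrt_nonneg _)
      exact mul_le_mul_of_nonneg_left hrC (le_of_lt hK)
    calc gap ≤ v ⬝ᵥ (x - y) := hgap_le
      _ ≤ Real.sqrt (v ⬝ᵥ v) * (K * r) := hCS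
      _ ≤ Real.sqrt (v ⬝ᵥ v) * (K * (C * Real.sqrt gap)) := hmono
      _ = Real.sqrt (v ⬝ᵥ v) * K * (C * Real.sqrt gap) := by ring
  have hss : Real.sqrt gap * Real.sqrt gap = gap := Real.mul_self_sqrt hgap0
  have hw : Real.sqrt (v ⬝ᵥ v) * Real.sqrt (v ⬝ᵥ v) = v ⬝ᵥ v := Real.mul_self_sqrt hvv0
  rcases (Real.sqrt_nonneg gap).eq_or_lt with hz | hz
  · have : gap = 0 := by rw [← hss, ← hz]; ring
    rw [this]
    exact mul_nonneg (by positivity) hvv0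
  · have hsle : Real.sqrt gap ≤ Real.sqrt (v ⬝ᵥ v) * K * C := by
      apply le_of_mul_le_mul_right _ hz
      calc Real.sqrt gap * Real.sqrt gap = gap := hss
        _ ≤ Real.sqrt (v ⬝ᵥ v) * K * (C * Real.sqrt gap) := hfinal
        _ = Real.sqrt (v ⬝ᵥ v) * K * C * Real.sqrt gap := by ring
    have hfin2 : gap ≤ (K ^ 2 * C ^ 2 + 1) * (v ⬝ᵥ v) := by
      have hKC0 : 0 ≤ Real.sqrt (v ⬝ᵥ v) * K * C :=
        mul_nonneg (mul_nonneg (Real.sqrt_nonneg _) hK.le) hC0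
      have h2 := mul_le_mul hsle hsle (le_of_lt hz) hKC0
      have h3 : (Real.sqrt (v ⬝ᵥ v) * K * C) * (Real.sqrt (v ⬝ᵥ v) * K * C)
          = (Real.sqrt (v ⬝ᵥ v) * Real.sqrt (v ⬝ᵥ v)) * (K ^ 2 * C ^ 2) := by ring
      rw [hw] at h3
      rw [hss, h3] at h2
      nlinarith [h2, hvv0]
    exact hfin2
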